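/- For fixed σ > 0, α > 0 and b ∈ ℝ, the function a ↦ s(a,b) is differentiable on (0,∞) with derivative a ↦ s(a, b − α). Consequently, for any m′ ∈ ℝ the single-pixel negative Poisson–Gaussian log-likelihood F(m) = m − ln s(m, m′) is differentiable on (0,∞) with derivative F′(m) = 1 − s(m, m′ − α)/s(m, m′). -/

import Mathlib

/-- The Poisson–Gaussian series `s(a,b) = Σ_{j} (a^j / j!) exp(−(b − α j)² / (2σ²))`. -/
noncomputable def pgSeries (σ α a b : ℝ) : ℝ :=
  ∑' j : ℕ, (a ^ j / (Nat.factorial j : ℝ)) * Real.exp (-(b - α * j) ^ 2 / (2 * σ ^ 2))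

lemma pg_exp_le_one (σ α b : ℝ) (j : ℕ) :
    Real.exp (-(b - α * j) ^ 2 / (2 * σ ^ 2)) ≤ 1 := by
  rw [Real.exp_le_one_iff]
  apply div_nonpos_of_nonpos_of_nonneg
  · exact neg_nonpos.mpr (sq_nonneg _)
  · positivity

lemma pg_summable (σ α a b : ℝ) (ha : 0 ≤ a) :
    Summable (fun j : ℕ => (a ^ j / (Nat.factorial j : ℝ)) *
      Real.exp (-(b - α * j) ^ 2 / (2 * σ ^ 2))) := by
  apply Summable.of_nonneg_of_le (fun j => by positivity)
    (fun j => ?_) (Real.summable_pow_div_factorial a)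
  calc (a ^ j / (Nat.factorial j : ℝ)) * Real.exp (-(b - α * j) ^ 2 / (2 * σ ^ 2))
      ≤ (a ^ j / (Nat.factorial j : ℝ)) * 1 := by
        apply mul_le_mul_of_nonneg_left (pg_exp_le_one σ α b j) (by positivity)
    _ = a ^ j / (Nat.factorial j : ℝ) := mul_one _

lemma pg_pos (σ α a b : ℝ) (ha : 0 ≤ a) : 0 < pgSeries σ α a b := by
  have h := pg_summable σ α a b ha
  rw [pgSeries]
  exact lt_of_lt_of_le (by positivity) (Summable.le_tsum h 0 (fun j _ => by positivity))

theorem stmt_1 (σ α : ℝ) (hσ : 0 < σ) (hα : 0 < α) (b : ℝ) :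
    (∀ a : ℝ, 0 < a → HasDerivAt (fun x => pgSeries σ α x b) (pgSeries σ α a (b - α)) a) ∧
    (∀ m' m : ℝ, 0 < m →
      HasDerivAt (fun x => x - Real.log (pgSeries σ α x m'))
        (1 - pgSeries σ α m (m' - α) / pgSeries σ α m m') m) := by
  have key : ∀ (b : ℝ) (a : ℝ), 0 < a →
      HasDerivAt (fun x => pgSeries σ α x b) (pgSeries σ α a (b - α)) a := by
    intro b a ha
    set c : ℕ → ℝ := fun j => Real.exp (-(b - α * j) ^ 2 / (2 * σ ^ 2)) with hc
    set g : ℕ → ℝ → ℝ := fun n x => (x ^ n / (Nat.factorial n : ℝ)) * c n with hg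
    set g' : ℕ → ℝ → ℝ := fun n x =>
      Nat.rec 0 (fun k _ => (x ^ k / (Nat.factorial k : ℝ)) * c (k+1)) n with hg'
    set R : ℝ := |a| + 1 with hR
    set u : ℕ → ℝ := fun n =>
      Nat.rec 0 (fun k _ => R ^ k / (Nat.factorial k : ℝ)) n with hu
    have hRpos : 0 < R := by positivity
    have hu_sum : Summable u := by
      rw [← summable_nat_add_iff 1]
      exact Real.summable_pow_div_factorial R
    have ht : IsOpen (Set.Ioo (-R) R) := isOpen_Ioo
    have haT : a ∈ Set.Ioo (-R) R := by
      constructor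
      · have : (0:ℝ) < R := hRpos
        linarith [abs_nonneg a, ha]
      · have := le_abs_self a
        linarith
    have hgd : ∀ n y, y ∈ Set.Ioo (-R) R → HasDerivAt (g n) (g' n y) y := by
      intro n y _
      cases n with
      | zero => simpa [hg, hg'] using (hasDerivAt_const y ((1 / (Nat.factorial 0 : ℝ)) * c 0))
      | succ k =>
        have h1 : HasDerivAt (fun x : ℝ => x ^ (k+1)) ((k+1 : ℕ) * y ^ k) y :=
          hasDerivAt_pow (k+1) y
        have h2 := h1.mul_const (c (k+1) / (Nat.factorial (k+1) : ℝ))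
        have hfne : ((Nat.factorial k : ℝ)) ≠ 0 := by positivity
        have e : (fun x : ℝ => x ^ (k+1) * (c (k+1) / (Nat.factorial (k+1) : ℝ))) = g (k+1) := by
          funext x; simp only [hg]; ring
        have e2 : ((k+1 : ℕ) : ℝ) * y ^ k * (c (k+1) / (Nat.factorial (k+1) : ℝ))
            = g' (k+1) y := by
          simp only [hg', Nat.factorial_succ]
          push_cast
          field_simp
        rw [← e, ← e2]
        exact h2
    have hgb : ∀ n y, y ∈ Set.Ioo (-R) R → ‖g' n y‖ ≤ u n := by
      intro n y hy
      cases n with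
      | zero => simp [hg', hu]
      | succ k =>
        have hyR : |y| ≤ R := by
          rw [abs_le]; exact ⟨hy.1.le, hy.2.le⟩
        have hcle : c (k+1) ≤ 1 := pg_exp_le_one σ α b (k+1)
        have hcpos : 0 < c (k+1) := Real.exp_pos _
        simp only [hg', hu]
        rw [Real.norm_eq_abs, abs_mul, abs_div, abs_pow, Nat.abs_cast,
          abs_of_pos hcpos]
        calc |y| ^ k / (Nat.factorial k : ℝ) * c (k+1)
            ≤ R ^ k / (Nat.factorial k : ℝ) * 1 := by
              gcongr
          _ = R ^ k / (Nat.factorial k : ℝ) := mul_one _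
    have hg0 : Summable (fun n => g n a) := pg_summable σ α a b ha.le
    have hmain := hasDerivAt_tsum_of_isPreconnected hu_sum ht
      (convex_Ioo (-R) R).isPreconnected hgd hgb haT hg0 haT
    have hsum' : Summable (fun n => g' (n+1) a) := by
      simp only [hg']
      exact pg_summable σ α a (b - α) ha.le |>.congr (fun k => by
        simp only [hc]
        push_cast
        ring_nf)
    have heq : (∑' n, g' n a) = pgSeries σ α a (b - α) := by
      have h1 : (∑' n, g' n a) = g' 0 a + ∑' n, g' (n+1) a :=
        Summable.tsum_eq_zero_add ((summable_nat_add_iff 1).mp hsum')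
      rw [h1]
      show (0:ℝ) + _ = _
      rw [zero_add, pgSeries]
      apply tsum_congr
      intro k
      simp only [hg', hc]
      push_cast
      ring_nf
    rw [← heq]
    exact hmain.congr_of_eventuallyEq (by
      filter_upwards with x
      rfl)
  refine ⟨key b, ?_⟩
  intro m' m hm
  have h1 := key m' m hm
  have hne : pgSeries σ α m m' ≠ 0 := (pg_pos σ α m m' hm.le).ne'
  have h2 := h1.log hne
  exact (hasDerivAt_id' m).sub h2
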